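/- Let m_1, ..., m_n be integers with m_i ≥ 2, s/t = [m_1, ..., m_n] with 0 < t < s coprime, and M = M(m_1, ..., m_n) the tridiagonal matrix with diagonal -m_i and off-diagonals 1. Let w be the solution of M w = (m_1-2, ..., m_n-2)^T. Then the first component of w equals -1 + (1+t)/s. -/

import Mathlib

/-- Hirzebruch–Jung continued fraction `[m₁, …, mₙ] = m₁ - 1/(m₂ - 1/(… - 1/mₙ))`. -/
def hjCF : List ℤ → ℚ
  | [] => 0
  | a :: l => (a : ℚ) - (hjCF l)⁻¹

/-- The tridiagonal matrix with `-mᵢ` on the diagonal and `1` on the sub- and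
super-diagonals. -/
def triM {n : ℕ} (m : Fin n → ℤ) : Matrix (Fin n) (Fin n) ℤ :=
  Matrix.of fun i j =>
    if i = j then -m i
    else if (i : ℕ) + 1 = (j : ℕ) ∨ (j : ℕ) + 1 = (i : ℕ) then 1 else 0

/-- Pair of consecutive continuants of a Hirzebruch–Jung continued fraction. -/
def contK : List ℤ → ℤ × ℤ
  | [] => (1, 0)
  | a :: l => (a * (contK l).1 - (contK l).2, (contK l).1)

/-- Head continuants. -/
def hdA (f : ℕ → ℤ) : ℕ → ℤ × ℤ
  | 0 => (1, 0)
  | k+1 => (f k * (hdA f k).1 - (hdA f k).2, (hdA f k).1)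

lemma contK_pos : ∀ l : List ℤ, (∀ x ∈ l, 2 ≤ x) →
    0 ≤ (contK l).2 ∧ (contK l).2 < (contK l).1 := by
  intro l
  induction l with
  | nil => intro _; simp [contK]
  | cons a l ih =>
    intro h
    have ha : 2 ≤ a := h a (by simp)
    obtain ⟨h1, h2⟩ := ih (fun x hx => h x (by simp [hx]))
    refine ⟨by simpa [contK] using le_of_lt (lt_of_le_of_lt h1 h2), ?_⟩
    simp only [contK]
    nlinarith

lemma contK_coprime : ∀ l : List ℤ, IsCoprime (contK l).1 (contK l).2 := by
  intro l
  induction l with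
  | nil => simpa [contK] using isCoprime_one_left
  | cons a l ih =>
    simp only [contK]
    have : IsCoprime ((contK l).2 + (-a) * (contK l).1) (contK l).1 :=
      ih.symm.add_mul_right_left (-a)
    have h2 := this.neg_left
    convert h2 using 1
    · rfl
    ring

lemma hjCF_eq : ∀ l : List ℤ, (∀ x ∈ l, 2 ≤ x) →
    hjCF l = ((contK l).1 : ℚ) / ((contK l).2 : ℚ) := by
  intro l
  induction l with
  | nil => intro _; simp [hjCF, contK]
  | cons a l ih =>
    intro h
    have hl : ∀ x ∈ l, 2 ≤ x := fun x hx => h x (by simp [hx])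
    obtain ⟨h1, h2⟩ := contK_pos l hl
    have hne : ((contK l).1 : ℚ) ≠ 0 := by exact_mod_cast (by omega : (contK l).1 ≠ 0)
    rw [hjCF, ih hl]
    simp only [contK]
    push_cast
    rw [inv_div]
    field_simp

lemma row_eq {n : ℕ} (m : Fin n → ℤ) (w : Fin n → ℚ)
    (hw : ((triM m).map (Int.cast : ℤ → ℚ)).mulVec w = fun i => (m i : ℚ) - 2)
    (i : Fin n) :
    (if h : 0 < (i:ℕ) then w ⟨(i:ℕ)-1, by omega⟩ else 0) - (m i : ℚ) * w i +
    (if h : (i:ℕ)+1 < n then w ⟨(i:ℕ)+1, h⟩ else 0) = (m i : ℚ) - 2 := by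
  have h0 := congrFun hw i
  rw [Matrix.mulVec, dotProduct] at h0
  have hsplit : ∀ j : Fin n, ((triM m).map (Int.cast : ℤ → ℚ)) i j * w j =
      (if i = j then -(m i:ℚ) * w j else 0) +
      ((if ((i:ℕ)+1 = (j:ℕ)) then w j else 0) + (if ((j:ℕ)+1 = (i:ℕ)) then w j else 0)) := by
    intro j
    simp only [triM, Matrix.map_apply, Matrix.of_apply, Fin.ext_iff]
    split_ifs <;> push_cast <;> first
      | ring1
      | (exfalso; omega)
  rw [Finset.sum_congr rfl (fun j _ => hsplit j)] at h0
  rw [Finset.sum_add_distrib, Finset.sum_add_distrib] at h0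
  rw [Finset.sum_ite_eq Finset.univ i (fun j => -(m i:ℚ) * w j)] at h0
  simp only [Finset.mem_univ, if_pos] at h0
  have hS2 : (∑ j : Fin n, if ((i:ℕ)+1 = (j:ℕ)) then w j else 0) =
      (if h : (i:ℕ)+1 < n then w ⟨(i:ℕ)+1, h⟩ else 0) := by
    by_cases hi : (i:ℕ)+1 < n
    · have hc : ∀ j : Fin n, (if ((i:ℕ)+1 = (j:ℕ)) then w j else 0) =
          (if j = (⟨(i:ℕ)+1, hi⟩ : Fin n) then w j else 0) := by
        intro j
        by_cases h : (i:ℕ)+1 = (j:ℕ)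
        · rw [if_pos h, if_pos (Fin.ext (by simp only [Fin.val_mk]; omega))]
        · rw [if_neg h, if_neg (by simp only [Fin.ext_iff, Fin.val_mk]; omega)]
      rw [dif_pos hi, Finset.sum_congr rfl (fun j _ => hc j),
        Finset.sum_ite_eq' Finset.univ (⟨(i:ℕ)+1, hi⟩ : Fin n) w]
      simp
    · rw [dif_neg hi]
      exact Finset.sum_eq_zero (fun j _ => if_neg (by omega))
  have hS3 : (∑ j : Fin n, if ((j:ℕ)+1 = (i:ℕ)) then w j else 0) =
      (if h : 0 < (i:ℕ) then w ⟨(i:ℕ)-1, by omega⟩ else 0) := by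
    by_cases hi : 0 < (i:ℕ)
    · have hb : (i:ℕ)-1 < n := by omega
      have hc : ∀ j : Fin n, (if ((j:ℕ)+1 = (i:ℕ)) then w j else 0) =
          (if j = (⟨(i:ℕ)-1, hb⟩ : Fin n) then w j else 0) := by
        intro j
        by_cases h : (j:ℕ)+1 = (i:ℕ)
        · rw [if_pos h, if_pos (Fin.ext (by simp only [Fin.val_mk]; omega))]
        · rw [if_neg h, if_neg (by simp only [Fin.ext_iff, Fin.val_mk]; omega)]
      rw [dif_pos hi, Finset.sum_congr rfl (fun j _ => hc j),
        Finset.sum_ite_eq' Finset.univ (⟨(i:ℕ)-1, hb⟩ : Fin n) w]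
      simp
    · rw [dif_neg hi]
      exact Finset.sum_eq_zero (fun j _ => if_neg (by omega))
  rw [hS2, hS3] at h0
  linarith [h0]

theorem stmt4 (n : ℕ) (hn : 0 < n) (m : Fin n → ℤ) (s t : ℤ) (w : Fin n → ℚ)
    (hm : ∀ i, 2 ≤ m i) (ht : 0 < t) (hts : t < s) (hcop : IsCoprime s t)
    (hcf : hjCF (List.ofFn m) = (s : ℚ) / t)
    (hw : ((triM m).map (Int.cast : ℤ → ℚ)).mulVec w = fun i => (m i : ℚ) - 2) :
    w ⟨0, hn⟩ = -1 + (1 + (t : ℚ)) / s := by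
  set L := List.ofFn m with hL
  have hlen : L.length = n := by simp [hL]
  have hLmem : ∀ x ∈ L, 2 ≤ x := by
    intro x hx
    rw [hL, List.mem_ofFn] at hx
    obtain ⟨i, rfl⟩ := hx
    exact hm i
  set mf : ℕ → ℤ := fun k => if h : k < n then m ⟨k, h⟩ else 0 with hmf
  set A : ℕ → ℤ := fun k => (hdA mf k).1 with hA
  set B : ℕ → ℤ := fun k => (contK (L.drop k)).1 with hB
  set C : ℕ → ℤ := fun k => (contK (L.drop k)).2 with hC
  have hmmf : ∀ (k : ℕ) (h : k < n), m ⟨k, h⟩ = mf k := by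
    intro k h; rw [hmf]; simp [h]
  -- basic structural facts
  have F1 : ∀ k, k < n → L.drop k = mf k :: L.drop (k+1) := by
    intro k hk
    have h1 : L[k]'(by omega) = mf k := by
      simp only [hL, List.getElem_ofFn]
      exact hmmf k hk
    rw [List.drop_eq_getElem_cons (by omega : k < L.length), h1]
  have F2 : ∀ k, k < n → B k = mf k * B (k+1) - C (k+1) ∧ C k = B (k+1) := by
    intro k hk
    rw [hB, hC]
    simp only
    rw [F1 k hk]
    exact ⟨rfl, rfl⟩
  have F3 : B n = 1 ∧ C n = 0 := by
    rw [hB, hC]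
    simp only
    rw [List.drop_eq_nil_of_le (by omega)]
    exact ⟨rfl, rfl⟩
  have hdropmem : ∀ k, ∀ x ∈ L.drop k, 2 ≤ x :=
    fun k x hx => hLmem x (List.mem_of_mem_drop hx)
  -- number theory: B 0 = s, C 0 = t
  have hB0L : B 0 = (contK L).1 := rfl
  have hC0L : C 0 = (contK L).2 := rfl
  have hC0pos : 0 < C 0 := by
    have h2 : C 0 = B 1 := (F2 0 hn).2
    have h3 := contK_pos (L.drop 1) (hdropmem 1)
    have hB1 : B 1 = (contK (L.drop 1)).1 := rfl
    omega
  have hpos0 := contK_pos L hLmem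
  have hB0pos : 0 < B 0 := by rw [hB0L]; rw [hC0L] at hC0pos; omega
  have hcross : B 0 * t = s * C 0 := by
    have h1 := hjCF_eq L hLmem
    rw [hcf, ← hB0L, ← hC0L] at h1
    have hC0 : ((C 0 : ℤ) : ℚ) ≠ 0 := by exact_mod_cast (by omega : C 0 ≠ 0)
    have htQ : ((t : ℤ) : ℚ) ≠ 0 := by exact_mod_cast (by omega : t ≠ 0)
    rw [div_eq_div_iff htQ hC0] at h1
    exact_mod_cast h1.symm
  have hcopBC : IsCoprime (B 0) (C 0) := by
    rw [hB0L, hC0L]; exact contK_coprime L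
  have hB0s : B 0 = s := by
    have hd1 : s ∣ B 0 := hcop.dvd_of_dvd_mul_right ⟨C 0, by linarith [hcross]⟩
    have hd2 : B 0 ∣ s := hcopBC.dvd_of_dvd_mul_right ⟨t, by linarith [hcross]⟩
    exact Int.dvd_antisymm (by omega) (by omega) hd2 hd1
  have hC0t : C 0 = t := by
    have h : s * C 0 = s * t := by rw [← hcross, hB0s]
    have hne : s ≠ 0 := by omega
    exact mul_left_cancel₀ hne h
  -- hdA recurrences
  have hA0 : A 0 = 1 := rfl
  have hArec : ∀ k, A (k+1) = mf k * A k - (hdA mf k).2 := fun k => rfl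
  have hA2rec : ∀ k, (hdA mf (k+1)).2 = A k := fun k => rfl
  have hAstep : ∀ k, A (k+2) = mf (k+1) * A (k+1) - A k := by
    intro k
    rw [hArec (k+1), hA2rec k]
  -- determinant identity: A n = B 0 = s
  have F6 : ∀ k, k ≤ n → (hdA mf k).1 * B k - (hdA mf k).2 * C k = B 0 := by
    intro k
    induction k with
    | zero => intro _; simp [hdA]
    | succ k ih =>
      intro hk
      have hk' : k < n := by omega
      have h2 := F2 k hk'
      have hi := ih (le_of_lt hk')
      rw [h2.1, h2.2] at hi
      show (mf k * (hdA mf k).1 - (hdA mf k).2) * B (k+1) - (hdA mf k).1 * C (k+1) = B 0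
      linear_combination hi
  have hAn : A n = s := by
    have h := F6 n le_rfl
    rw [F3.1, F3.2] at h
    have h' : (hdA mf n).1 = A n := rfl
    linear_combination h + hB0s - h' 
  -- the main recursion
  have hsne : (s : ℚ) ≠ 0 := by exact_mod_cast (by omega : s ≠ 0)
  set d : ℚ := (s : ℚ) * w ⟨0, hn⟩ - ((A 0 : ℤ) : ℚ) - ((C 0 : ℤ) : ℚ) + s with hd
  have claim : ∀ k, ∀ h : k < n, (s : ℚ) * w ⟨k, h⟩ =
      ((A k : ℤ) : ℚ) + ((C k : ℤ) : ℚ) - s + ((A k : ℤ) : ℚ) * d := by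
    intro k
    induction k using Nat.twoStepInduction with
    | zero =>
      intro h
      rw [hd, hA0]
      push_cast
      ring
    | one =>
      intro h1
      have hbase : (s : ℚ) * w ⟨0, hn⟩ =
          ((A 0 : ℤ) : ℚ) + ((C 0 : ℤ) : ℚ) - s + ((A 0 : ℤ) : ℚ) * d := by
        rw [hd, hA0]; push_cast; ring
      have hrow := row_eq m w hw ⟨0, hn⟩
      simp only [Fin.val_mk] at hrow
      rw [dif_neg (by omega), dif_pos (by omega : 0 + 1 < n)] at hrow
      have hrow' : (0:ℚ) - ((mf 0 : ℤ) : ℚ) * w ⟨0, hn⟩ + w ⟨1, h1⟩ = ((mf 0 : ℤ) : ℚ) - 2 := by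
        rw [← hmmf 0 hn]
        exact hrow
      have qA1 : ((A 1 : ℤ) : ℚ) = ((mf 0 : ℤ) : ℚ) * ((A 0 : ℤ) : ℚ) := by
        have h0' : (hdA mf 0).2 = 0 := rfl
        have : A 1 = mf 0 * A 0 := by rw [hArec 0, h0', sub_zero]
        exact_mod_cast congrArg (fun x : ℤ => (x : ℚ)) this
      have qC1 : ((mf 0 : ℤ) : ℚ) * ((C 0 : ℤ) : ℚ) - ((C 1 : ℤ) : ℚ) = (s : ℚ) := by
        have h2 : B 0 = mf 0 * B 1 - C 1 ∧ C 0 = B 1 := F2 0 hn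
        have : mf 0 * C 0 - C 1 = s := by linear_combination mf 0 * h2.2 + hB0s - h2.1
        exact_mod_cast congrArg (fun x : ℤ => (x : ℚ)) this
      linear_combination (s : ℚ) * hrow' + ((mf 0 : ℤ) : ℚ) * hbase + qC1 - (1 + d) * qA1
    | more k ih1 ih2 =>
      intro h
      have e1 := ih1 (by omega)
      have e2 := ih2 (by omega)
      have hrow := row_eq m w hw ⟨k+1, by omega⟩
      simp only [Fin.val_mk] at hrow
      rw [dif_pos (by omega : 0 < k+1), dif_pos (by omega : (k+1)+1 < n)] at hrow
      have hrow' : w ⟨k, by omega⟩ - ((mf (k+1) : ℤ) : ℚ) * w ⟨k+1, by omega⟩ + w ⟨k+2, h⟩ =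
          ((mf (k+1) : ℤ) : ℚ) - 2 := by
        rw [← hmmf (k+1) (by omega)]
        exact hrow
      have qA : ((A (k+2) : ℤ) : ℚ) =
          ((mf (k+1) : ℤ) : ℚ) * ((A (k+1) : ℤ) : ℚ) - ((A k : ℤ) : ℚ) := by
        exact_mod_cast congrArg (fun x : ℤ => (x : ℚ)) (hAstep k)
      have qC : ((C (k+2) : ℤ) : ℚ) =
          ((mf (k+1) : ℤ) : ℚ) * ((C (k+1) : ℤ) : ℚ) - ((C k : ℤ) : ℚ) := by
        have h1 : B k = mf k * B (k+1) - C (k+1) ∧ C k = B (k+1) := F2 k (by omega)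
        have h2 : B (k+1) = mf (k+1) * B (k+2) - C (k+2) ∧ C (k+1) = B (k+2) :=
          F2 (k+1) (by omega)
        have : C (k+2) = mf (k+1) * C (k+1) - C k := by
          linear_combination h2.1 - mf (k+1) * h2.2 + h1.2
        exact_mod_cast congrArg (fun x : ℤ => (x : ℚ)) this
      linear_combination (s : ℚ) * hrow' + ((mf (k+1) : ℤ) : ℚ) * e2 - e1 - (1 + d) * qA - qC
  -- conclude
  rcases eq_or_lt_of_le (show 1 ≤ n from hn) with h1 | h2
  · -- n = 1
    have hn1 : n = 1 := h1.symm
    subst hn1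
    have hrow := row_eq m w hw ⟨0, hn⟩
    simp only [Fin.val_mk] at hrow
    rw [dif_neg (by omega), dif_neg (by omega)] at hrow
    have hF2 : B 0 = mf 0 * B 1 - C 1 ∧ C 0 = B 1 := F2 0 hn
    have hF3 : B 1 = 1 ∧ C 1 = 0 := F3
    have hs : mf 0 = s := by
      linear_combination hB0s - hF2.1 - mf 0 * hF3.1 + hF3.2
    have htt : t = 1 := by omega
    have hms : (m ⟨0, hn⟩ : ℚ) = (s : ℚ) := by
      exact_mod_cast congrArg (fun x : ℤ => (x : ℚ)) ((hmmf 0 hn).trans hs)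
    rw [hms] at hrow
    have hsw : (s : ℚ) * w ⟨0, hn⟩ = 2 - s := by linear_combination -hrow
    have hww : w 0 = w ⟨0, hn⟩ := by congr
    rw [htt]
    push_cast
    field_simp
    linear_combination hsw + (s : ℚ) * hww
  · -- n ≥ 2
    obtain ⟨n', rfl⟩ : ∃ n', n = n' + 2 := ⟨n - 2, by omega⟩
    have e1 := claim n' (by omega)
    have e2 := claim (n'+1) (by omega)
    have hrow := row_eq m w hw ⟨n'+1, by omega⟩
    simp only [Fin.val_mk] at hrow
    rw [dif_pos (by omega : 0 < n'+1), dif_neg (by omega : ¬ (n'+1)+1 < n'+2)] at hrow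
    have hrow' : w ⟨n', by omega⟩ - ((mf (n'+1) : ℤ) : ℚ) * w ⟨n'+1, by omega⟩ + 0 =
        ((mf (n'+1) : ℤ) : ℚ) - 2 := by
      rw [← hmmf (n'+1) (by omega)]
      exact hrow
    have qA : ((A (n'+2) : ℤ) : ℚ) =
        ((mf (n'+1) : ℤ) : ℚ) * ((A (n'+1) : ℤ) : ℚ) - ((A n' : ℤ) : ℚ) := by
      exact_mod_cast congrArg (fun x : ℤ => (x : ℚ)) (hAstep n')
    have qAn : ((A (n'+2) : ℤ) : ℚ) = (s : ℚ) := by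
      exact_mod_cast congrArg (fun x : ℤ => (x : ℚ)) hAn
    have hCn' : C n' = mf (n'+1) := by
      have h1 : B n' = mf n' * B (n'+1) - C (n'+1) ∧ C n' = B (n'+1) := F2 n' (by omega)
      have h2 : B (n'+1) = mf (n'+1) * B (n'+2) - C (n'+2) ∧ C (n'+1) = B (n'+2) :=
        F2 (n'+1) (by omega)
      have h3 : B (n'+2) = 1 ∧ C (n'+2) = 0 := F3
      linear_combination h1.2 + h2.1 + (mf (n'+1)) * h3.1 - h3.2
    have hCn1 : C (n'+1) = 1 := by
      have h2 : C (n'+1) = B (n'+2) := (F2 (n'+1) (by omega)).2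
      have h3 : B (n'+2) = 1 := F3.1
      omega
    have qCn' : ((C n' : ℤ) : ℚ) = ((mf (n'+1) : ℤ) : ℚ) := by
      exact_mod_cast congrArg (fun x : ℤ => (x : ℚ)) hCn'
    have qCn1 : ((C (n'+1) : ℤ) : ℚ) = 1 := by
      exact_mod_cast congrArg (fun x : ℤ => (x : ℚ)) hCn1
    have hd0 : -(s : ℚ) * d = 0 := by
      linear_combination (s : ℚ) * hrow' - e1 + ((mf (n'+1) : ℤ) : ℚ) * e2 -
        (1 + d) * qA + (1 + d) * qAn - qCn' + ((mf (n'+1) : ℤ) : ℚ) * qCn1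
    have hdz : d = 0 := by
      have := mul_eq_zero.mp hd0
      rcases this with h | h
      · exact absurd (neg_eq_zero.mp h) hsne
      · exact h
    have hfin : (s : ℚ) * w ⟨0, hn⟩ - ((A 0 : ℤ) : ℚ) - ((C 0 : ℤ) : ℚ) + s = 0 := by
      rw [← hd, hdz]
    have qC0 : ((C 0 : ℤ) : ℚ) = (t : ℚ) := by
      exact_mod_cast congrArg (fun x : ℤ => (x : ℚ)) hC0t
    rw [hA0] at hfin
    rw [qC0] at hfin
    have hww : w 0 = w ⟨0, hn⟩ := by congr
    push_cast at hfin
    field_simp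
    linear_combination hfin
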